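/- Let 0 < κ₁ < κ₂ and 0 < γ < 1, and set ρ₂ = 2√(κ₁(1−γ)/(κ₂²−κ₁²)). Then QF₂(ρ₂) = QF₃(ρ₂) and QF₂′(ρ₂) = QF₃′(ρ₂), where QF₂(s) = ½κ₂s² + γ and QF₃(s) = −½κ₁s² + 2s·√(κ₁(κ₁+κ₂)(1−γ)/(κ₂−κ₁)) + (γ(κ₁+κ₂) − 2κ₁)/(κ₂−κ₁). -/

import Mathlib

/-- For `0 < κ₁ < κ₂`, `0 < γ < 1` and `ρ₂ = 2√(κ₁(1−γ)/(κ₂²−κ₁²))`,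
the branches `QF₂` and `QF₃` of the quasiconvex envelope agree together with their
derivatives at `s = ρ₂`. -/
theorem stmt_4 (κ₁ κ₂ γ : ℝ) (hκ₁ : 0 < κ₁) (hκ : κ₁ < κ₂) (hγ0 : 0 < γ) (hγ1 : γ < 1) :
    let ρ₂ : ℝ := 2 * Real.sqrt (κ₁ * (1 - γ) / (κ₂ ^ 2 - κ₁ ^ 2))
    let QF₂ : ℝ → ℝ := fun s => (1 / 2) * κ₂ * s ^ 2 + γ
    let QF₃ : ℝ → ℝ := fun s =>
      -(1 / 2) * κ₁ * s ^ 2 + 2 * s * Real.sqrt (κ₁ * (κ₁ + κ₂) * (1 - γ) / (κ₂ - κ₁))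
        + (γ * (κ₁ + κ₂) - 2 * κ₁) / (κ₂ - κ₁)
    QF₂ ρ₂ = QF₃ ρ₂ ∧ deriv QF₂ ρ₂ = deriv QF₃ ρ₂ := by
  intro ρ₂ QF₂ QF₃
  have hsum : (0:ℝ) < κ₁ + κ₂ := by linarith
  have hd : (0:ℝ) < κ₂ - κ₁ := by linarith
  have hg : (0:ℝ) < 1 - γ := by linarith
  have hs2 : (0:ℝ) < κ₂ ^ 2 - κ₁ ^ 2 := by nlinarith
  have hs2' : κ₂ ^ 2 - κ₁ ^ 2 ≠ 0 := ne_of_gt hs2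
  have hd' : κ₂ - κ₁ ≠ 0 := ne_of_gt hd
  set A : ℝ := κ₁ * (1 - γ) / (κ₂ ^ 2 - κ₁ ^ 2) with hA
  have hA0 : 0 ≤ A := by positivity
  set a : ℝ := Real.sqrt A with ha
  have ha2 : a ^ 2 = A := Real.sq_sqrt hA0
  have hb : Real.sqrt (κ₁ * (κ₁ + κ₂) * (1 - γ) / (κ₂ - κ₁)) = (κ₁ + κ₂) * a := by
    have harg : κ₁ * (κ₁ + κ₂) * (1 - γ) / (κ₂ - κ₁) = (κ₁ + κ₂) ^ 2 * A := by
      rw [hA]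
      field_simp
      ring
    rw [harg, Real.sqrt_mul (sq_nonneg _), Real.sqrt_sq hsum.le]
  have hρ : ρ₂ = 2 * a := rfl
  have hAval : A * (κ₂ ^ 2 - κ₁ ^ 2) = κ₁ * (1 - γ) := by
    rw [hA, div_mul_cancel₀ _ hs2']
  constructor
  · show (1 / 2) * κ₂ * ρ₂ ^ 2 + γ =
      -(1 / 2) * κ₁ * ρ₂ ^ 2 + 2 * ρ₂ * Real.sqrt (κ₁ * (κ₁ + κ₂) * (1 - γ) / (κ₂ - κ₁))
        + (γ * (κ₁ + κ₂) - 2 * κ₁) / (κ₂ - κ₁)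
    rw [hρ, hb]
    field_simp
    nlinarith [ha2, hAval]
  · have h2 : deriv QF₂ ρ₂ = κ₂ * ρ₂ := by
      show deriv (fun s : ℝ => (1 / 2) * κ₂ * s ^ 2 + γ) ρ₂ = κ₂ * ρ₂
      have h := ((hasDerivAt_pow 2 ρ₂).const_mul ((1:ℝ)/2 * κ₂)).add_const γ
      rw [h.deriv]
      norm_num; ring
    have h3 : deriv QF₃ ρ₂ =
        -κ₁ * ρ₂ + 2 * Real.sqrt (κ₁ * (κ₁ + κ₂) * (1 - γ) / (κ₂ - κ₁)) := by
      show deriv (fun s : ℝ =>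
        -(1 / 2) * κ₁ * s ^ 2 + 2 * s * Real.sqrt (κ₁ * (κ₁ + κ₂) * (1 - γ) / (κ₂ - κ₁))
          + (γ * (κ₁ + κ₂) - 2 * κ₁) / (κ₂ - κ₁)) ρ₂ = _
      set B := Real.sqrt (κ₁ * (κ₁ + κ₂) * (1 - γ) / (κ₂ - κ₁))
      have h1 : HasDerivAt (fun s : ℝ => -(1/2) * κ₁ * s ^ 2)
          (-(1/2) * κ₁ * (2 * ρ₂ ^ 1)) ρ₂ := by
        simpa using (hasDerivAt_pow 2 ρ₂).const_mul (-(1/2) * κ₁ : ℝ)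
      have h2' : HasDerivAt (fun s : ℝ => 2 * s * B) (2 * B) ρ₂ := by
        have := (hasDerivAt_id ρ₂).const_mul (2 * B)
        simpa [mul_comm, mul_assoc, mul_left_comm] using this
      have h := (h1.add h2').add_const ((γ * (κ₁ + κ₂) - 2 * κ₁) / (κ₂ - κ₁))
      rw [(show HasDerivAt (fun s : ℝ => -(1 / 2) * κ₁ * s ^ 2 + 2 * s * B + (γ * (κ₁ + κ₂) - 2 * κ₁) / (κ₂ - κ₁)) _ ρ₂ from h).deriv]
      ring
    rw [h2, h3, hb, hρ]
    ring
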